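/- Let A ∈ ℝ^{m×n} and k ∈ ℕ. There exist entrywise nonnegative matrices U ∈ ℝ^{m×k} and V ∈ ℝ^{n×k} with A = U Vᵀ if and only if there exist symmetric matrices B ∈ ℝ^{m×m} and C ∈ ℝ^{n×n} such that the (m+n)×(m+n) block matrix [[B, A], [Aᵀ, C]] can be written as W Wᵀ for some entrywise nonnegative W ∈ ℝ^{(m+n)×k} (i.e., the block matrix is completely positive with a decomposition of k columns). -/

import Mathlib

open Matrix

/-- `A` admits a nonnegative factorization `A = U Vᵀ` with `k` columns iff there are
symmetric matrices `B, C` such that the block matrix `[[B, A], [Aᵀ, C]]` is completely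
positive with a nonnegative factorization of `k` columns. -/
theorem nonneg_factorization_iff_block_completelyPositive (m n k : ℕ)
    (A : Matrix (Fin m) (Fin n) ℝ) :
    (∃ (U : Matrix (Fin m) (Fin k) ℝ) (V : Matrix (Fin n) (Fin k) ℝ),
      (∀ i j, 0 ≤ U i j) ∧ (∀ i j, 0 ≤ V i j) ∧ A = U * Vᵀ) ↔
    (∃ (B : Matrix (Fin m) (Fin m) ℝ) (C : Matrix (Fin n) (Fin n) ℝ),
      B.IsSymm ∧ C.IsSymm ∧
      ∃ W : Matrix (Fin m ⊕ Fin n) (Fin k) ℝ,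
        (∀ i j, 0 ≤ W i j) ∧ Matrix.fromBlocks B A Aᵀ C = W * Wᵀ) := by
  constructor
  · rintro ⟨U, V, hU, hV, hA⟩
    refine ⟨U * Uᵀ, V * Vᵀ, ?_, ?_, fromRows U V, ?_, ?_⟩
    · simp [Matrix.IsSymm, Matrix.transpose_mul]
    · simp [Matrix.IsSymm, Matrix.transpose_mul]
    · rintro (i | i) j <;> simp [fromRows_apply_inl, fromRows_apply_inr, hU, hV]
    · rw [transpose_fromRows, fromRows_mul_fromCols, hA]
      simp [Matrix.transpose_mul, hA]
  · rintro ⟨B, C, _, _, W, hW, hblock⟩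
    refine ⟨fun i j => W (Sum.inl i) j, fun i j => W (Sum.inr i) j,
      fun i j => hW _ _, fun i j => hW _ _, ?_⟩
    ext i j
    have := congrFun (congrFun hblock (Sum.inl i)) (Sum.inr j)
    show A i j = ∑ l, W (Sum.inl i) l * W (Sum.inr j) l; simpa [Matrix.mul_apply, Matrix.fromBlocks] using this
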